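/- Let f(x,y) ∈ K[[x_1,...,x_n, y]] be a nonzero formal power series in n+1 variables over a field K of characteristic zero, and let ȳ(x) ∈ K[[x_1,...,x_n]] be a power series without constant term with f(x, ȳ(x)) = 0. Then there exists g(x,y) ∈ K[[x,y]] with g(x, ȳ(x)) = 0 and (∂g/∂y)(x, ȳ(x)) ≠ 0. -/

import Mathlib

/-- Substitution of power series without constant term into a formal power series,
defined coefficientwise. -/
noncomputable def psubst {K : Type} [Field K] {σ τ : Type} [Fintype σ] [DecidableEq σ]
    (g : σ → MvPowerSeries τ K) (f : MvPowerSeries σ K) : MvPowerSeries τ K :=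
  fun e => ∑ d ∈ Finset.Iic (Finsupp.equivFunOnFinite.symm fun _ => e.sum fun _ m => m),
    MvPowerSeries.coeff d f * MvPowerSeries.coeff e (∏ i, g i ^ d i)

/-- The partial derivative of a multivariate formal power series. -/
noncomputable def ppderiv {K : Type} [Field K] {σ : Type} [DecidableEq σ] (i : σ)
    (f : MvPowerSeries σ K) : MvPowerSeries σ K :=
  fun e => ((e i + 1 : ℕ) : K) * MvPowerSeries.coeff (e + Finsupp.single i 1) f


noncomputable def auxEmb {n : ℕ} (e : Fin n →₀ ℕ) : Fin (n+1) →₀ ℕ :=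
  e.embDomain Fin.castSuccEmb

noncomputable def auxRestr {n : ℕ} (d : Fin (n+1) →₀ ℕ) : Fin n →₀ ℕ :=
  Finsupp.equivFunOnFinite.symm fun i => d i.castSucc

lemma auxRestr_apply {n : ℕ} (d : Fin (n+1) →₀ ℕ) (i : Fin n) :
    auxRestr d i = d i.castSucc := rfl

lemma auxEmb_castSucc {n : ℕ} (e : Fin n →₀ ℕ) (i : Fin n) :
    auxEmb e i.castSucc = e i := by
  simpa [auxEmb] using Finsupp.embDomain_apply_self Fin.castSuccEmb e i

lemma auxEmb_last {n : ℕ} (e : Fin n →₀ ℕ) : auxEmb e (Fin.last n) = 0 := by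
  apply Finsupp.embDomain_notin_range
  simp only [Fin.coe_castSuccEmb, Set.mem_range, not_exists]
  exact fun i h => absurd h (Fin.castSucc_lt_last i).ne

lemma auxRestr_auxEmb {n : ℕ} (e : Fin n →₀ ℕ) : auxRestr (auxEmb e) = e := by
  ext i; rw [auxRestr_apply, auxEmb_castSucc]

lemma auxDecomp {n : ℕ} (d : Fin (n+1) →₀ ℕ) :
    d = auxEmb (auxRestr d) + Finsupp.single (Fin.last n) (d (Fin.last n)) := by
  ext i
  cases i using Fin.lastCases with
  | last => simp [auxEmb_last]
  | cast i =>
      rw [Finsupp.add_apply, auxEmb_castSucc, auxRestr_apply,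
        Finsupp.single_eq_of_ne' (Fin.castSucc_lt_last i).ne', add_zero]

lemma prodXpow {K : Type} [Field K] {N : ℕ} (m : Fin N →₀ ℕ) :
    ∏ i, (MvPowerSeries.X i : MvPowerSeries (Fin N) K) ^ m i
      = MvPowerSeries.monomial m 1 := by
  have h : ∀ s : Finset (Fin N), ∏ i ∈ s, (MvPowerSeries.monomial (R := K) (Finsupp.single i (m i)) 1)
      = MvPowerSeries.monomial (R := K) (∑ i ∈ s, Finsupp.single i (m i)) 1 := by
    intro s
    induction s using Finset.induction with
    | empty => simp [MvPowerSeries.monomial_zero_one]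
    | insert _ _ h ih =>
        rw [Finset.prod_insert h, Finset.sum_insert h, ih,
          MvPowerSeries.monomial_mul_monomial, one_mul]
  simp_rw [MvPowerSeries.X_pow_eq]
  rw [h, Finsupp.univ_sum_single]

lemma coeff_psubst_eq {K : Type} [Field K] {n : ℕ}
    (ybar : MvPowerSeries (Fin n) K)
    (hy0 : MvPowerSeries.constantCoeff ybar = 0)
    (g : MvPowerSeries (Fin (n+1)) K) (e : Fin n →₀ ℕ)
    (hsmall : ∀ d : Fin (n+1) →₀ ℕ,
      (∑ i : Fin n, d i.castSucc) < ∑ i, e i → MvPowerSeries.coeff d g = 0) :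
    MvPowerSeries.coeff e (psubst (Fin.snoc (fun i => MvPowerSeries.X i) ybar) g)
      = MvPowerSeries.coeff (auxEmb e) g := by
  have hP : ∀ d : Fin (n+1) →₀ ℕ,
      ∏ i, (Fin.snoc (fun i => MvPowerSeries.X i) ybar : Fin (n+1) → _) i ^ d i
        = MvPowerSeries.monomial (auxRestr d) 1 * ybar ^ d (Fin.last n) := by
    intro d
    rw [Fin.prod_univ_castSucc, Fin.snoc_last, ← prodXpow (K := K) (auxRestr d)]
    congr 1
    exact Finset.prod_congr rfl fun i _ => by rw [Fin.snoc_castSucc, auxRestr_apply]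
  have hesum : ∀ i : Fin n, e i ≤ e.sum fun _ m => m := by
    intro i
    by_cases h : e i = 0
    · simp [h]
    · rw [Finsupp.sum]
      exact Finset.single_le_sum (f := fun j => e j) (fun _ _ => Nat.zero_le _)
        (Finsupp.mem_support_iff.2 h)
  have hmem : auxEmb e ∈ Finset.Iic (Finsupp.equivFunOnFinite.symm
      fun _ => e.sum fun _ m => m) := by
    rw [Finset.mem_Iic]
    refine Finsupp.le_def.2 fun i => ?_
    cases i using Fin.lastCases with
    | last => rw [auxEmb_last]; exact Nat.zero_le _
    | cast i => rw [auxEmb_castSucc]; exact hesum i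
  have hdef : MvPowerSeries.coeff e (psubst (Fin.snoc (fun i => MvPowerSeries.X i) ybar) g)
      = ∑ d ∈ Finset.Iic (Finsupp.equivFunOnFinite.symm fun _ => e.sum fun _ m => m),
        MvPowerSeries.coeff d g * MvPowerSeries.coeff e
          (∏ i, (Fin.snoc (fun i => MvPowerSeries.X i) ybar : Fin (n+1) → _) i ^ d i) := rfl
  rw [hdef, Finset.sum_eq_single (auxEmb e)]
  · rw [hP, auxRestr_auxEmb, auxEmb_last, pow_zero, mul_one,
      MvPowerSeries.coeff_monomial_same, mul_one]
  · intro d _ hne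
    rw [hP d, MvPowerSeries.coeff_monomial_mul]
    by_cases hle : auxRestr d ≤ e
    · rw [if_pos hle, one_mul]
      by_cases heq : auxRestr d = e
      · have hj : d (Fin.last n) ≠ 0 := by
          intro h0
          apply hne
          conv_lhs => rw [auxDecomp d]
          rw [heq, h0, Finsupp.single_zero, add_zero]
        rw [heq, tsub_self, MvPowerSeries.coeff_zero_eq_constantCoeff_apply, map_pow, hy0,
          zero_pow hj, mul_zero]
      · have hle' : ∀ i, auxRestr d i ≤ e i := Finsupp.le_def.1 hle
        have hlt : (∑ i : Fin n, d i.castSucc) < ∑ i, e i := by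
          simp_rw [← auxRestr_apply]
          refine Finset.sum_lt_sum (fun i _ => hle' i) ?_
          by_contra hc
          push_neg at hc
          exact heq (Finsupp.ext fun i => le_antisymm (hle' i) (hc i (Finset.mem_univ i)))
        rw [hsmall d hlt, zero_mul]
    · rw [if_neg hle, mul_zero]
  · exact fun h => absurd hmem h

lemma coeff_ppderiv {K : Type} [Field K] {σ : Type} [DecidableEq σ] (i : σ)
    (f : MvPowerSeries σ K) (u : σ →₀ ℕ) :
    MvPowerSeries.coeff u (ppderiv i f)
      = ((u i + 1 : ℕ) : K) * MvPowerSeries.coeff (u + Finsupp.single i 1) f := rfl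

lemma coeff_iter_ppderiv {K : Type} [Field K] {σ : Type} [DecidableEq σ] (y : σ) (k : ℕ)
    (g : MvPowerSeries σ K) (u : σ →₀ ℕ) :
    MvPowerSeries.coeff u ((ppderiv y)^[k] g)
      = ((∏ t ∈ Finset.range k, (u y + 1 + t) : ℕ) : K)
          * MvPowerSeries.coeff (u + Finsupp.single y k) g := by
  induction k generalizing g with
  | zero => simp
  | succ k ih =>
      rw [Function.iterate_succ_apply, ih, coeff_ppderiv]
      rw [show u + Finsupp.single y k + Finsupp.single y 1 = u + Finsupp.single y (k+1) by
        rw [add_assoc, ← Finsupp.single_add]]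
      rw [show (u + Finsupp.single y k) y = u y + k by
        rw [Finsupp.add_apply, Finsupp.single_eq_same]]
      rw [Finset.prod_range_succ]
      push_cast
      ring

lemma vanish {K : Type} [Field K] [CharZero K] {n : ℕ}
    (ybar : MvPowerSeries (Fin n) K)
    (hy0 : MvPowerSeries.constantCoeff ybar = 0) :
    ∀ N (e : Fin n →₀ ℕ), (∑ i, e i) = N →
    ∀ g : MvPowerSeries (Fin (n+1)) K,
      (∀ m, psubst (Fin.snoc (fun i => MvPowerSeries.X i) ybar)
        ((ppderiv (Fin.last n))^[m] g) = 0) →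
      ∀ k, MvPowerSeries.coeff (auxEmb e + Finsupp.single (Fin.last n) k) g = 0 := by
  intro N
  induction N using Nat.strong_induction_on with
  | _ N IH =>
  intro e he g hg k
  have hsmall : ∀ d : Fin (n+1) →₀ ℕ, (∑ i : Fin n, d i.castSucc) < ∑ i, e i →
      MvPowerSeries.coeff d ((ppderiv (Fin.last n))^[k] g) = 0 := by
    intro d hd
    have hg' : ∀ m, psubst (Fin.snoc (fun i => MvPowerSeries.X i) ybar)
        ((ppderiv (Fin.last n))^[m] ((ppderiv (Fin.last n))^[k] g)) = 0 :=
      fun m => by rw [← Function.iterate_add_apply]; exact hg _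
    have hlt : (∑ i, auxRestr d i) < N := by
      rw [← he]; simp_rw [auxRestr_apply]; exact hd
    have := IH _ hlt (auxRestr d) rfl _ hg' (d (Fin.last n))
    rwa [← auxDecomp d] at this
  have h0 := coeff_psubst_eq ybar hy0 _ e hsmall
  rw [hg k, map_zero] at h0
  have h1 := coeff_iter_ppderiv (Fin.last n) k g (auxEmb e)
  rw [← h0] at h1
  have hc : ((∏ t ∈ Finset.range k, (auxEmb e (Fin.last n) + 1 + t) : ℕ) : K) ≠ 0 := by
    exact_mod_cast (Finset.prod_pos fun t _ => by omega : 0 < ∏ t ∈ Finset.range k,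
      (auxEmb e (Fin.last n) + 1 + t)).ne'
  exact (mul_eq_zero.1 h1.symm).resolve_left hc

/-- Corollary 2 (key step): if a nonzero `f(x,y)` in `n+1` variables is annihilated by a
formal power series `ȳ(x)` without constant term, then some `g` annihilated by `ȳ` has
`∂g/∂y` not annihilated by `ȳ`. The last variable of `Fin (n+1)` plays the role of `y`. -/
theorem exists_annihilator_with_nonvanishing_y_derivative {K : Type} [Field K] [CharZero K]
    {n : ℕ} (f : MvPowerSeries (Fin (n + 1)) K) (hf : f ≠ 0)
    (ybar : MvPowerSeries (Fin n) K)
    (hy0 : MvPowerSeries.constantCoeff ybar = 0)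
    (hsol : psubst (Fin.snoc (fun i => MvPowerSeries.X i) ybar) f = 0) :
    ∃ g : MvPowerSeries (Fin (n + 1)) K,
      psubst (Fin.snoc (fun i => MvPowerSeries.X i) ybar) g = 0 ∧
      psubst (Fin.snoc (fun i => MvPowerSeries.X i) ybar) (ppderiv (Fin.last n) g) ≠ 0 := by
  classical
  have hexists : ∃ m, psubst (Fin.snoc (fun i => MvPowerSeries.X i) ybar)
      ((ppderiv (Fin.last n))^[m] f) ≠ 0 := by
    by_contra hc
    push_neg at hc
    apply hf
    apply MvPowerSeries.ext
    intro d
    rw [MvPowerSeries.coeff_zero]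
    have := vanish ybar hy0 (∑ i, auxRestr d i) (auxRestr d) rfl f hc (d (Fin.last n))
    rwa [← auxDecomp d] at this
  have hm := Nat.find_spec hexists
  have hm0 : 0 < Nat.find hexists := by
    rcases Nat.eq_zero_or_pos (Nat.find hexists) with h | h
    · rw [h, Function.iterate_zero_apply] at hm
      exact absurd hsol hm
    · exact h
  refine ⟨(ppderiv (Fin.last n))^[Nat.find hexists - 1] f, ?_, ?_⟩
  · have := Nat.find_min hexists (Nat.sub_lt hm0 one_pos)
    exact not_not.1 this
  · have heq : ppderiv (Fin.last n) ((ppderiv (Fin.last n))^[Nat.find hexists - 1] f)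
        = (ppderiv (Fin.last n))^[Nat.find hexists] f := by
      conv_rhs => rw [show Nat.find hexists = Nat.find hexists - 1 + 1 from by omega,
        Function.iterate_succ_apply']
    rw [heq]
    exact hm
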